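/- If π_* : S → A is a uniformly optimal stationary policy of a finite deterministic Markov decision process (i.e., v_{π_*}(x) ≤ v_π(x) for all policies π and all x ∈ S), then for every initial state x₀ ∈ S the closed-loop control sequence defined by u(t) = π_*(x(t)) with x(0) = x₀ and x(t+1) = f(x(t), u(t)) attains the infimum of the discounted cost J(x₀, u) over all action sequences u : ℕ → A. -/

import Mathlib

/-- Trajectory of a deterministic MDP: `x(0) = x₀` and `x(t+1) = f (x t) (u t)`. -/
def traj {S A : Type*} (f : S → A → S) (x0 : S) (u : ℕ → A) : ℕ → S
  | 0 => x0
  | t + 1 => f (traj f x0 u t) (u t)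

/-- Discounted cost of an action sequence from an initial state. -/
noncomputable def Jcost {S A : Type*} (f : S → A → S) (g : S → A → ℝ) (lam : ℝ)
    (x0 : S) (u : ℕ → A) : ℝ :=
  ∑' t : ℕ, lam ^ t * g (traj f x0 u t) (u t)

/-- Closed-loop trajectory under a stationary policy. -/
def ctraj {S A : Type*} (f : S → A → S) (pol : S → A) (x : S) : ℕ → S
  | 0 => x
  | t + 1 => f (ctraj f pol x t) (pol (ctraj f pol x t))

/-- Value function of a stationary policy. -/
noncomputable def vpi {S A : Type*} (f : S → A → S) (g : S → A → ℝ) (lam : ℝ)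
    (pol : S → A) (x : S) : ℝ :=
  ∑' t : ℕ, lam ^ t * g (ctraj f pol x t) (pol (ctraj f pol x t))

lemma dmdp_g_bound {S A : Type*} [Fintype S] [Nonempty S] [Fintype A] [Nonempty A]
    (g : S → A → ℝ) : ∃ M, 0 ≤ M ∧ ∀ x a, |g x a| ≤ M := by
  obtain ⟨M, hM⟩ := Finite.exists_le (fun p : S × A => |g p.1 p.2|)
  exact ⟨M, le_trans (abs_nonneg _) (hM (Classical.arbitrary _)), fun x a => hM (x, a)⟩

lemma dmdp_summable {S A : Type*} [Fintype S] [Nonempty S] [Fintype A] [Nonempty A]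
    (g : S → A → ℝ) {lam : ℝ} (h0 : 0 ≤ lam) (h1 : lam < 1) (y : ℕ → S) (w : ℕ → A) :
    Summable (fun t => lam ^ t * g (y t) (w t)) := by
  obtain ⟨M, hM0, hM⟩ := dmdp_g_bound g
  apply Summable.of_norm_bounded
    ((summable_geometric_of_lt_one h0 h1).mul_left M)
  intro t
  rw [norm_mul, norm_pow, Real.norm_eq_abs, Real.norm_eq_abs, abs_of_nonneg h0, mul_comm]
  exact mul_le_mul_of_nonneg_right (hM _ _) (pow_nonneg h0 t)

lemma ctraj_shift {S A : Type*} (f : S → A → S) (pol : S → A) (x : S) :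
    ∀ t, ctraj f pol x (t + 1) = ctraj f pol (f x (pol x)) t
  | 0 => rfl
  | t + 1 => by rw [ctraj, ctraj_shift f pol x t]; rfl

lemma vpi_rec {S A : Type*} [Fintype S] [Nonempty S] [Fintype A] [Nonempty A]
    (f : S → A → S) (g : S → A → ℝ) {lam : ℝ} (h0 : 0 ≤ lam) (h1 : lam < 1)
    (pol : S → A) (x : S) :
    vpi f g lam pol x = g x (pol x) + lam * vpi f g lam pol (f x (pol x)) := by
  have hs := dmdp_summable g h0 h1 (fun t => ctraj f pol x t) (fun t => pol (ctraj f pol x t))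
  rw [vpi, Summable.tsum_eq_zero_add hs]
  simp only [pow_zero, one_mul]
  congr 1
  rw [vpi, ← tsum_mul_left]
  congr 1
  funext t
  rw [ctraj_shift, pow_succ]
  ring

lemma dmdp_bellman {S A : Type*} [Fintype S] [Nonempty S] [Fintype A] [Nonempty A]
    (f : S → A → S) (g : S → A → ℝ) {lam : ℝ} (hlam0 : 0 < lam) (hlam1 : lam < 1)
    (polStar : S → A)
    (hopt : ∀ (pol : S → A) (x : S), vpi f g lam polStar x ≤ vpi f g lam pol x) :
    ∀ x a, vpi f g lam polStar x ≤ g x a + lam * vpi f g lam polStar (f x a) := by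
  classical
  by_contra h
  push_neg at h
  obtain ⟨x, a, hxa⟩ := h
  set pol' := Function.update polStar x a with hpol'
  have hpx : pol' x = a := Function.update_self x a polStar
  have key : ∀ y, g y (pol' y) + lam * vpi f g lam polStar (f y (pol' y))
      ≤ vpi f g lam polStar y := by
    intro y
    by_cases hy : y = x
    · subst hy; rw [hpx]; linarith
    · rw [hpol', Function.update_of_ne hy]
      exact (vpi_rec f g hlam0.le hlam1 polStar y).ge
  set d := fun y => vpi f g lam pol' y - vpi f g lam polStar y with hd
  have hstep : ∀ y, d y ≤ lam * d (f y (pol' y)) := by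
    intro y
    have h1 := vpi_rec f g hlam0.le hlam1 pol' y
    have h2 := key y
    simp only [hd]
    nlinarith
  have hdle : ∀ y, d y ≤ 0 := by
    obtain ⟨y0, -, hy0⟩ := Finset.univ.exists_max_image d Finset.univ_nonempty
    have h1 : d y0 ≤ lam * d (f y0 (pol' y0)) := hstep y0
    have h2 : d (f y0 (pol' y0)) ≤ d y0 := hy0 _ (Finset.mem_univ _)
    have h3 : d y0 ≤ 0 := by nlinarith
    intro y
    exact le_trans (hy0 y (Finset.mem_univ _)) h3
  have hrec : vpi f g lam pol' x = g x a + lam * vpi f g lam pol' (f x a) := by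
    have := vpi_rec f g hlam0.le hlam1 pol' x
    rwa [hpx] at this
  have hfin : vpi f g lam pol' x < vpi f g lam polStar x := by
    have h4 := hdle (f x a)
    simp only [hd] at h4
    nlinarith
  exact absurd (hopt pol' x) (not_le.mpr hfin)

lemma dmdp_tail_bound {lam M : ℝ} (h0 : 0 ≤ lam) (h1 : lam < 1) (c : ℕ → ℝ)
    (hc : ∀ t, |c t| ≤ M) (n : ℕ) :
    ∑ t ∈ Finset.range n, lam ^ t * c t
      ≤ (∑' t, lam ^ t * c t) + lam ^ n * (M * (1 - lam)⁻¹) := by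
  have hM0 : 0 ≤ M := le_trans (abs_nonneg _) (hc 0)
  have hsum : Summable (fun t => lam ^ t * c t) := by
    apply Summable.of_norm_bounded
      ((summable_geometric_of_lt_one h0 h1).mul_left M)
    intro t
    rw [norm_mul, norm_pow, Real.norm_eq_abs, Real.norm_eq_abs, abs_of_nonneg h0, mul_comm]
    exact mul_le_mul_of_nonneg_right (hc _) (pow_nonneg h0 t)
  have hsplit := (Summable.sum_add_tsum_nat_add n hsum).symm
  rw [hsplit]
  have hs2 : Summable (fun t => lam ^ (t + n) * c (t + n)) :=
    (summable_nat_add_iff n).mpr hsum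
  have htb : |∑' t, lam ^ (t + n) * c (t + n)| ≤ lam ^ n * (M * (1 - lam)⁻¹) := by
    calc |∑' t, lam ^ (t + n) * c (t + n)|
        ≤ ∑' t, |lam ^ (t + n) * c (t + n)| := by
          rw [← Real.norm_eq_abs]
          refine (norm_tsum_le_tsum_norm ?_).trans_eq ?_
          · simpa only [Real.norm_eq_abs] using hs2.abs
          · simp only [Real.norm_eq_abs]
      _ ≤ ∑' t : ℕ, lam ^ n * (M * lam ^ t) := by
          apply Summable.tsum_le_tsum _ hs2.abs
            (((summable_geometric_of_lt_one h0 h1).mul_left M).mul_left (lam ^ n))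
          intro t
          rw [abs_mul, abs_pow, abs_of_nonneg h0, pow_add]
          calc lam ^ t * lam ^ n * |c (t + n)|
              ≤ lam ^ t * lam ^ n * M := by
                apply mul_le_mul_of_nonneg_left (hc _)
                positivity
            _ = lam ^ n * (M * lam ^ t) := by ring
      _ = lam ^ n * (M * (1 - lam)⁻¹) := by
          rw [tsum_mul_left, tsum_mul_left, tsum_geometric_of_lt_one h0 h1]
  have := neg_abs_le (∑' t, lam ^ (t + n) * c (t + n))
  linarith

set_option maxHeartbeats 1000000 in
theorem optimal_policy_closed_loop_attains_infimum
    {S A : Type*} [Fintype S] [Nonempty S] [Fintype A] [Nonempty A]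
    (f : S → A → S) (g : S → A → ℝ) (lam : ℝ) (hlam0 : 0 < lam) (hlam1 : lam < 1)
    (polStar : S → A)
    (hopt : ∀ (pol : S → A) (x : S), vpi f g lam polStar x ≤ vpi f g lam pol x)
    (x0 : S) :
    ∀ u : ℕ → A,
      Jcost f g lam x0 (fun t => polStar (ctraj f polStar x0 t)) ≤ Jcost f g lam x0 u := by
  intro u
  -- closed-loop cost equals v_{π*}(x0)
  have hcl : ∀ t, traj f x0 (fun t => polStar (ctraj f polStar x0 t)) t
      = ctraj f polStar x0 t := by
    intro t
    induction t with
    | zero => rfl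
    | succ t ih => rw [traj, ih]; rfl
  have hJcl : Jcost f g lam x0 (fun t => polStar (ctraj f polStar x0 t))
      = vpi f g lam polStar x0 := by
    rw [Jcost, vpi]
    congr 1
    funext t
    rw [hcl t]
  rw [hJcl]
  -- bounds
  obtain ⟨M, hM0, hM⟩ := dmdp_g_bound g
  obtain ⟨V, hV⟩ := Finite.exists_le (fun y : S => |vpi f g lam polStar y|)
  have hV0 : 0 ≤ V := le_trans (abs_nonneg _) (hV (Classical.arbitrary _))
  set x : ℕ → S := traj f x0 u with hx
  have hbell := dmdp_bellman f g hlam0 hlam1 polStar hopt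
  -- DP induction
  have hkey : ∀ n, vpi f g lam polStar x0
      ≤ ∑ t ∈ Finset.range n, lam ^ t * g (x t) (u t) + lam ^ n * vpi f g lam polStar (x n) := by
    intro n
    induction n with
    | zero => simp [hx]; rfl
    | succ n ih =>
      have hb := hbell (x n) (u n)
      have h2 : lam ^ n * vpi f g lam polStar (x n)
          ≤ lam ^ n * (g (x n) (u n) + lam * vpi f g lam polStar (x (n + 1))) := by
        apply mul_le_mul_of_nonneg_left _ (pow_nonneg hlam0.le n)
        have : x (n + 1) = f (x n) (u n) := rfl
        rw [this]; exact hb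
      rw [Finset.sum_range_succ]
      calc vpi f g lam polStar x0
          ≤ ∑ t ∈ Finset.range n, lam ^ t * g (x t) (u t)
            + lam ^ n * vpi f g lam polStar (x n) := ih
        _ ≤ ∑ t ∈ Finset.range n, lam ^ t * g (x t) (u t)
            + lam ^ n * (g (x n) (u n) + lam * vpi f g lam polStar (x (n + 1))) := by
            linarith
        _ = (∑ t ∈ Finset.range n, lam ^ t * g (x t) (u t) + lam ^ n * g (x n) (u n))
            + lam ^ (n + 1) * vpi f g lam polStar (x (n + 1)) := by ring
  -- tail bound
  have hsum := dmdp_summable g hlam0.le hlam1 x u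
  have htail : ∀ n, ∑ t ∈ Finset.range n, lam ^ t * g (x t) (u t)
      ≤ Jcost f g lam x0 u + lam ^ n * (M * (1 - lam)⁻¹) := by
    intro n
    exact dmdp_tail_bound hlam0.le hlam1 (fun t => g (x t) (u t)) (fun t => hM _ _) n
  -- combine and take limit
  set C := M * (1 - lam)⁻¹ + V with hC
  have hall : ∀ n, vpi f g lam polStar x0 ≤ Jcost f g lam x0 u + lam ^ n * C := by
    intro n
    have h1 := hkey n
    have h2 := htail n
    have h3 : lam ^ n * vpi f g lam polStar (x n) ≤ lam ^ n * V := by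
      apply mul_le_mul_of_nonneg_left _ (pow_nonneg hlam0.le n)
      exact le_trans (le_abs_self _) (hV (x n))
    simp only [hC]
    nlinarith [pow_nonneg hlam0.le n]
  have hlim : Filter.Tendsto (fun n => Jcost f g lam x0 u + lam ^ n * C) Filter.atTop
      (nhds (Jcost f g lam x0 u + 0 * C)) := by
    apply Filter.Tendsto.add tendsto_const_nhds
    exact (tendsto_pow_atTop_nhds_zero_of_lt_one hlam0.le hlam1).mul_const C
  rw [zero_mul, add_zero] at hlim
  exact ge_of_tendsto' hlim hall
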